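/- arXiv:1903.06644 — 3 statements merged into one kernel-verified Lean document; each statement's English description precedes it below -/
import Mathlib

section
/- Let Ω₀,…,Ω_k ⊂ ℝⁿ be open bounded sets, t₀,…,t_k ∈ (0,1] with Σ t_i = 1, and let v_i:Ω_i→ℝ be continuous functions bounded from below satisfying v_i(x) → +∞ as x → ∂Ω_i for every i. Then the weighted infimal convolution w of v₀,…,v_k is continuous on Ω_λ, is exact at every point of Ω_λ, and satisfies w(x) → +∞ as x → ∂Ω_λ (i.e., for every sequence x^m ∈ Ω_λ with dist(x^m, ∂Ω_λ) → 0 one has w(x^m) → +∞). -/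
open Metric Filter Topology Set

noncomputable section

/-- The Hessian matrix of a real-valued function on `ℝⁿ` at a point. -/
def hessMat (n : ℕ) (φ : EuclideanSpace ℝ (Fin n) → ℝ) (x : EuclideanSpace ℝ (Fin n)) :
    Matrix (Fin n) (Fin n) ℝ :=
  Matrix.of fun i j =>
    iteratedFDeriv ℝ 2 φ x ![EuclideanSpace.single i 1, EuclideanSpace.single j 1]

/-- The quadratic form `⟨A v, v⟩` associated with a matrix. -/
def quadForm (n : ℕ) (A : Matrix (Fin n) (Fin n) ℝ) (v : EuclideanSpace ℝ (Fin n)) : ℝ :=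
  ∑ i, ∑ j, A i j * v i * v j

/-- The ordering of symmetric matrices: `A ≤ B` iff `B - A` is positive semidefinite. -/
def MatLE (n : ℕ) (A B : Matrix (Fin n) (Fin n) ℝ) : Prop := (B - A).PosSemidef

/-- `(ξ, A)` belongs to the second-order sub-jet `J^{2,-} u (x)` (relative to `Ω`):
`u y ≥ u x + ⟨ξ, y-x⟩ + ½⟨A(y-x), y-x⟩ + o(|y-x|²)` as `y → x` in `Ω`. -/
def InSubjet (n : ℕ) (Ω : Set (EuclideanSpace ℝ (Fin n))) (u : EuclideanSpace ℝ (Fin n) → ℝ)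
    (x ξ : EuclideanSpace ℝ (Fin n)) (A : Matrix (Fin n) (Fin n) ℝ) : Prop :=
  A.IsSymm ∧ ∀ ε > (0:ℝ), ∀ᶠ y in nhdsWithin x Ω,
    u x + (∑ i, ξ i * (y - x) i) + (1/2) * quadForm n A (y - x) - ε * ‖y - x‖^2 ≤ u y

/-- `(ξ, A)` belongs to the closure `J̄^{2,-} u (x)` of the second-order sub-jet. -/
def InClosureSubjet (n : ℕ) (Ω : Set (EuclideanSpace ℝ (Fin n)))
    (u : EuclideanSpace ℝ (Fin n) → ℝ) (x ξ : EuclideanSpace ℝ (Fin n))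
    (A : Matrix (Fin n) (Fin n) ℝ) : Prop :=
  ∃ (xm ξm : ℕ → EuclideanSpace ℝ (Fin n)) (Am : ℕ → Matrix (Fin n) (Fin n) ℝ),
    (∀ m, xm m ∈ Ω ∧ InSubjet n Ω u (xm m) (ξm m) (Am m)) ∧
    Tendsto xm atTop (nhds x) ∧ Tendsto (fun m => u (xm m)) atTop (nhds (u x)) ∧
    Tendsto ξm atTop (nhds ξ) ∧ Tendsto Am atTop (nhds A)

/-- Viscosity super-solution in the sense of Birindelli–Demengel of
`F(∇u, D²u) = g(x, u(x))` in `Ω`. -/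
def BDSuper (n : ℕ) (F : EuclideanSpace ℝ (Fin n) → Matrix (Fin n) (Fin n) ℝ → ℝ)
    (g : EuclideanSpace ℝ (Fin n) → ℝ → ℝ) (Ω : Set (EuclideanSpace ℝ (Fin n)))
    (u : EuclideanSpace ℝ (Fin n) → ℝ) : Prop :=
  ∀ x ∈ Ω,
    (∃ c : ℝ, ∃ r > (0:ℝ), ball x r ⊆ Ω ∧ (∀ y ∈ ball x r, u y = c) ∧
      ∀ y ∈ ball x r, 0 ≥ g y c) ∨
    (∀ φ : EuclideanSpace ℝ (Fin n) → ℝ, ContDiff ℝ 2 φ → φ x = u x →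
      (∀ y ∈ Ω, φ y ≤ u y) → gradient φ x ≠ 0 →
      F (gradient φ x) (hessMat n φ x) ≥ g x (u x))

/-- Viscosity sub-solution in the sense of Birindelli–Demengel of
`F(∇u, D²u) = g(x, u(x))` in `Ω`. -/
def BDSub (n : ℕ) (F : EuclideanSpace ℝ (Fin n) → Matrix (Fin n) (Fin n) ℝ → ℝ)
    (g : EuclideanSpace ℝ (Fin n) → ℝ → ℝ) (Ω : Set (EuclideanSpace ℝ (Fin n)))
    (u : EuclideanSpace ℝ (Fin n) → ℝ) : Prop :=
  ∀ x ∈ Ω,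
    (∃ c : ℝ, ∃ r > (0:ℝ), ball x r ⊆ Ω ∧ (∀ y ∈ ball x r, u y = c) ∧
      ∀ y ∈ ball x r, 0 ≤ g y c) ∨
    (∀ φ : EuclideanSpace ℝ (Fin n) → ℝ, ContDiff ℝ 2 φ → φ x = u x →
      (∀ y ∈ Ω, u y ≤ φ y) → gradient φ x ≠ 0 →
      F (gradient φ x) (hessMat n φ x) ≤ g x (u x))

/-- The set of `λ` admitting a positive l.s.c. viscosity super-solution (BD sense) of
`F(∇u, D²u) = λ u^{α+1}` in `Ω`. -/
def eigenSet (n : ℕ) (F : EuclideanSpace ℝ (Fin n) → Matrix (Fin n) (Fin n) ℝ → ℝ)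
    (α : ℝ) (Ω : Set (EuclideanSpace ℝ (Fin n))) : Set ℝ :=
  {lam | ∃ u : EuclideanSpace ℝ (Fin n) → ℝ, LowerSemicontinuousOn u Ω ∧
    (∀ x ∈ Ω, 0 < u x) ∧ BDSuper n F (fun _ s => lam * s ^ (α + 1)) Ω u}

/-- The principal eigenvalue `λ̄(Ω)`. -/
def princEig (n : ℕ) (F : EuclideanSpace ℝ (Fin n) → Matrix (Fin n) (Fin n) ℝ → ℝ)
    (α : ℝ) (Ω : Set (EuclideanSpace ℝ (Fin n))) : ℝ :=
  sSup (eigenSet n F α Ω)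

/-- (H1) Homogeneity. -/
def H1 (n : ℕ) (F : EuclideanSpace ℝ (Fin n) → Matrix (Fin n) (Fin n) ℝ → ℝ) (α : ℝ) : Prop :=
  ∀ t : ℝ, t ≠ 0 → ∀ μ : ℝ, ∀ ξ : EuclideanSpace ℝ (Fin n), ξ ≠ 0 →
    ∀ X : Matrix (Fin n) (Fin n) ℝ, X.IsSymm →
      F (t • ξ) (μ • X) = |t| ^ α * μ * F ξ X

/-- (H2) Uniform ellipticity with constants `c ≤ C`. -/
def H2 (n : ℕ) (F : EuclideanSpace ℝ (Fin n) → Matrix (Fin n) (Fin n) ℝ → ℝ)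
    (α c C : ℝ) : Prop :=
  ∀ ξ : EuclideanSpace ℝ (Fin n), ξ ≠ 0 → ∀ X Y : Matrix (Fin n) (Fin n) ℝ, X.IsSymm →
    Y.PosSemidef →
      c * ‖ξ‖ ^ α * Y.trace ≤ F ξ X - F ξ (X + Y) ∧
      F ξ X - F ξ (X + Y) ≤ C * ‖ξ‖ ^ α * Y.trace

/-- (H2)' Degenerate ellipticity. -/
def H2' (n : ℕ) (F : EuclideanSpace ℝ (Fin n) → Matrix (Fin n) (Fin n) ℝ → ℝ) : Prop :=
  ∀ ξ : EuclideanSpace ℝ (Fin n), ξ ≠ 0 → ∀ X Y : Matrix (Fin n) (Fin n) ℝ, X.IsSymm →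
    Y.IsSymm → (Y - X).PosSemidef → F ξ Y ≤ F ξ X

/-- (H3) Convexity in the matrix variable. -/
def H3 (n : ℕ) (F : EuclideanSpace ℝ (Fin n) → Matrix (Fin n) (Fin n) ℝ → ℝ) : Prop :=
  ∀ ξ : EuclideanSpace ℝ (Fin n), ξ ≠ 0 →
    ConvexOn ℝ {X : Matrix (Fin n) (Fin n) ℝ | X.IsSymm} (F ξ)

/-- Continuity of `F` on `(ℝⁿ ∖ {0}) × Sⁿ`. -/
def FCont (n : ℕ) (F : EuclideanSpace ℝ (Fin n) → Matrix (Fin n) (Fin n) ℝ → ℝ) : Prop :=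
  ContinuousOn (fun p : EuclideanSpace ℝ (Fin n) × Matrix (Fin n) (Fin n) ℝ => F p.1 p.2)
    {p | p.1 ≠ 0}

/-- Uniform exterior sphere condition. -/
def UnifExtSphere (n : ℕ) (Ω : Set (EuclideanSpace ℝ (Fin n))) : Prop :=
  ∃ r > (0:ℝ), ∀ y ∈ frontier Ω, ∃ z : EuclideanSpace ℝ (Fin n),
    dist z y = r ∧ ball z r ∩ Ω = ∅

/-- Lipschitz boundary: near every boundary point, after a rigid motion, `Ω` coincides with
the open region above the graph of a Lipschitz function. -/
def LipschitzBoundary (n : ℕ) (Ω : Set (EuclideanSpace ℝ (Fin n))) : Prop :=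
  ∀ y ∈ frontier Ω, ∃ U : Set (EuclideanSpace ℝ (Fin n)), IsOpen U ∧ y ∈ U ∧
    ∃ (ν : EuclideanSpace ℝ (Fin n)) (f : EuclideanSpace ℝ (Fin n) → ℝ) (K : NNReal),
      ‖ν‖ = 1 ∧ LipschitzWith K f ∧
      Ω ∩ U = {x | f (x - (inner ℝ x ν : ℝ) • ν) < (inner ℝ x ν : ℝ)} ∩ U

/-- The class `𝒜ⁿ`. -/
def ClassA (n : ℕ) (Ω : Set (EuclideanSpace ℝ (Fin n))) : Prop :=
  IsOpen Ω ∧ Bornology.IsBounded Ω ∧ IsConnected Ω ∧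
    LipschitzBoundary n Ω ∧ UnifExtSphere n Ω

/-- Minkowski convex combination `(1-t) Ω₀ + t Ω₁`. -/
def minkCombo (n : ℕ) (t : ℝ) (Ω₀ Ω₁ : Set (EuclideanSpace ℝ (Fin n))) :
    Set (EuclideanSpace ℝ (Fin n)) :=
  {z | ∃ x ∈ Ω₀, ∃ y ∈ Ω₁, z = (1 - t) • x + t • y}

/-- Distance from the boundary. -/
def distBdry (n : ℕ) (Ω : Set (EuclideanSpace ℝ (Fin n))) (x : EuclideanSpace ℝ (Fin n)) : ℝ :=
  Metric.infDist x (frontier Ω)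

/-- `d_Ω` is semiconcave on `cl(Ω)` with constant `κ`. -/
def SemiconcaveDist (n : ℕ) (Ω : Set (EuclideanSpace ℝ (Fin n))) (κ : ℝ) : Prop :=
  ConcaveOn ℝ (closure Ω) (fun x => distBdry n Ω x - κ / 2 * ‖x‖ ^ 2)

/-- A positive viscosity eigenfunction on `Ω`. -/
def IsPosEigenfunction (n : ℕ) (F : EuclideanSpace ℝ (Fin n) → Matrix (Fin n) (Fin n) ℝ → ℝ)
    (α : ℝ) (Ω : Set (EuclideanSpace ℝ (Fin n))) (u : EuclideanSpace ℝ (Fin n) → ℝ) : Prop :=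
  ContinuousOn u (closure Ω) ∧ (∀ x ∈ Ω, 0 < u x) ∧ (∀ x ∈ frontier Ω, u x = 0) ∧
  BDSub n F (fun _ s => princEig n F α Ω * (|s| ^ α * s)) Ω u ∧
  BDSuper n F (fun _ s => princEig n F α Ω * (|s| ^ α * s)) Ω u

/-- The transformed operator `G(ξ, X) = -F(ξ, ξ⊗ξ - X)`. -/
def Gop (n : ℕ) (F : EuclideanSpace ℝ (Fin n) → Matrix (Fin n) (Fin n) ℝ → ℝ)
    (ξ : EuclideanSpace ℝ (Fin n)) (X : Matrix (Fin n) (Fin n) ℝ) : ℝ :=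
  - F ξ (Matrix.vecMulVec (fun i => ξ i) (fun i => ξ i) - X)

/-- Minkowski combination `t₀Ω₀ + ⋯ + t_kΩ_k` of a family. -/
def minkComboFam (n k : ℕ) (t : Fin (k+1) → ℝ) (Ω : Fin (k+1) → Set (EuclideanSpace ℝ (Fin n))) :
    Set (EuclideanSpace ℝ (Fin n)) :=
  {x | ∃ p : Fin (k+1) → EuclideanSpace ℝ (Fin n), (∀ i, p i ∈ Ω i) ∧ x = ∑ i, t i • p i}

/-- The weighted infimal convolution of `v₀, …, v_k`. -/
def infConvFam (n k : ℕ) (t : Fin (k+1) → ℝ) (v : Fin (k+1) → EuclideanSpace ℝ (Fin n) → ℝ)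
    (Ω : Fin (k+1) → Set (EuclideanSpace ℝ (Fin n))) (x : EuclideanSpace ℝ (Fin n)) : ℝ :=
  sInf ((fun p : Fin (k+1) → EuclideanSpace ℝ (Fin n) => ∑ i, t i * v i (p i)) ''
    {p | (∀ i, p i ∈ Ω i) ∧ x = ∑ i, t i • p i})

/-- The weighted infimal convolution is exact at `x`. -/
def InfConvExactAt (n k : ℕ) (t : Fin (k+1) → ℝ) (v : Fin (k+1) → EuclideanSpace ℝ (Fin n) → ℝ)
    (Ω : Fin (k+1) → Set (EuclideanSpace ℝ (Fin n))) (x : EuclideanSpace ℝ (Fin n)) : Prop :=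
  ∃ p : Fin (k+1) → EuclideanSpace ℝ (Fin n), (∀ i, p i ∈ Ω i) ∧ x = ∑ i, t i • p i ∧
    infConvFam n k t v Ω x = ∑ i, t i * v i (p i)



section InfConvAux

variable {n k : ℕ} {Ω : Fin (k+1) → Set (EuclideanSpace ℝ (Fin n))}
  {t : Fin (k+1) → ℝ} {v : Fin (k+1) → EuclideanSpace ℝ (Fin n) → ℝ}

private lemma auxLB (ht : ∀ i, t i ∈ Set.Ioc (0:ℝ) 1) {c : Fin (k+1) → ℝ}
    (hc : ∀ i, ∀ x ∈ Ω i, c i ≤ v i x) {p : Fin (k+1) → EuclideanSpace ℝ (Fin n)}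
    (hp : ∀ i, p i ∈ Ω i) : ∑ i, t i * c i ≤ ∑ i, t i * v i (p i) :=
  Finset.sum_le_sum fun i _ => mul_le_mul_of_nonneg_left (hc i _ (hp i)) (ht i).1.le

private lemma auxBdd (ht : ∀ i, t i ∈ Set.Ioc (0:ℝ) 1)
    (hvb : ∀ i, ∃ m : ℝ, ∀ x ∈ Ω i, m ≤ v i x) (x : EuclideanSpace ℝ (Fin n)) :
    BddBelow ((fun p : Fin (k+1) → EuclideanSpace ℝ (Fin n) => ∑ i, t i * v i (p i)) ''
      {p | (∀ i, p i ∈ Ω i) ∧ x = ∑ i, t i • p i}) := by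
  choose c hc using hvb
  exact ⟨∑ i, t i * c i, fun z hz => by
    obtain ⟨p, hp, rfl⟩ := hz; exact auxLB ht hc hp.1⟩

private lemma auxVal (hΩ : ∀ i, IsOpen (Ω i) ∧ Bornology.IsBounded (Ω i))
    (hv : ∀ i, ContinuousOn (v i) (Ω i)) {l : Filter ℕ}
    {p : ℕ → Fin (k+1) → EuclideanSpace ℝ (Fin n)} {q : Fin (k+1) → EuclideanSpace ℝ (Fin n)}
    (hq : ∀ i, q i ∈ Ω i) (htend : Tendsto p l (𝓝 q)) :
    Tendsto (fun m => ∑ i, t i * v i (p m i)) l (𝓝 (∑ i, t i * v i (q i))) := by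
  refine tendsto_finset_sum _ fun i _ => ?_
  have hcoord : Tendsto (fun m => p m i) l (𝓝 (q i)) := tendsto_pi_nhds.1 htend i
  have hvc : ContinuousAt (v i) (q i) :=
    (hv i).continuousAt ((hΩ i).1.mem_nhds (hq i))
  exact (hvc.tendsto.comp hcoord).const_mul _

private lemma auxSum {l : Filter ℕ} {p : ℕ → Fin (k+1) → EuclideanSpace ℝ (Fin n)}
    {q : Fin (k+1) → EuclideanSpace ℝ (Fin n)} (htend : Tendsto p l (𝓝 q)) :
    Tendsto (fun m => ∑ i, t i • p m i) l (𝓝 (∑ i, t i • q i)) :=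
  tendsto_finset_sum _ fun i _ => ((tendsto_pi_nhds.1 htend i).const_smul _)

private lemma auxUpdate (t : Fin (k+1) → ℝ) (q : Fin (k+1) → EuclideanSpace ℝ (Fin n))
    (z : EuclideanSpace ℝ (Fin n)) :
    ∑ i, t i • Function.update q 0 z i = (∑ i, t i • q i) + (t 0 • z - t 0 • q 0) := by
  have h : ∑ i, (t i • Function.update q 0 z i - t i • q i) = t 0 • z - t 0 • q 0 := by
    rw [Finset.sum_eq_single 0]
    · rw [Function.update_self]
    · intro i _ hi; rw [Function.update_of_ne hi]; simp
    · intro h; exact absurd (Finset.mem_univ _) h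
  rw [Finset.sum_sub_distrib] at h
  exact (sub_eq_iff_eq_add.mp h).trans (add_comm _ _)

private lemma auxUpdate' (ht : ∀ i, t i ∈ Set.Ioc (0:ℝ) 1)
    (q : Fin (k+1) → EuclideanSpace ℝ (Fin n)) (h : EuclideanSpace ℝ (Fin n)) :
    ∑ i, t i • Function.update q 0 (q 0 + (t 0)⁻¹ • h) i = (∑ i, t i • q i) + h := by
  rw [auxUpdate]
  congr 1
  rw [smul_add, smul_inv_smul₀ (ne_of_gt (ht 0).1)]
  abel

private lemma auxOpen (hΩ : ∀ i, IsOpen (Ω i) ∧ Bornology.IsBounded (Ω i))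
    (ht : ∀ i, t i ∈ Set.Ioc (0:ℝ) 1) : IsOpen (minkComboFam n k t Ω) := by
  rw [Metric.isOpen_iff]
  rintro x ⟨p, hp, rfl⟩
  obtain ⟨r, hr, hball⟩ := Metric.isOpen_iff.1 (hΩ 0).1 (p 0) (hp 0)
  refine ⟨t 0 * r, mul_pos (ht 0).1 hr, fun y hy => ?_⟩
  rw [mem_ball, dist_eq_norm] at hy
  refine ⟨Function.update p 0 (p 0 + (t 0)⁻¹ • (y - ∑ i, t i • p i)), fun i => ?_, ?_⟩
  · by_cases h0 : i = 0
    · subst h0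
      rw [Function.update_self]
      apply hball
      rw [mem_ball, dist_eq_norm]
      have h2 : p 0 + (t 0)⁻¹ • (y - ∑ i, t i • p i) - p 0
          = (t 0)⁻¹ • (y - ∑ i, t i • p i) := by abel
      rw [h2, norm_smul, norm_inv, Real.norm_eq_abs, abs_of_pos (ht 0).1]
      have h1 : (t 0)⁻¹ * ‖y - ∑ i, t i • p i‖ < (t 0)⁻¹ * (t 0 * r) :=
        mul_lt_mul_of_pos_left hy (inv_pos.2 (ht 0).1)
      rwa [inv_mul_cancel_left₀ (ne_of_gt (ht 0).1)] at h1
    · rw [Function.update_of_ne h0]; exact hp i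
  · rw [auxUpdate' ht]; abel

private lemma auxBounded (hΩ : ∀ i, IsOpen (Ω i) ∧ Bornology.IsBounded (Ω i))
    (ht : ∀ i, t i ∈ Set.Ioc (0:ℝ) 1) : Bornology.IsBounded (minkComboFam n k t Ω) := by
  choose R hR using fun i => (isBounded_iff_forall_norm_le.1 (hΩ i).2)
  rw [isBounded_iff_forall_norm_le]
  refine ⟨∑ i, R i, ?_⟩
  rintro x ⟨p, hp, rfl⟩
  refine (norm_sum_le _ _).trans (Finset.sum_le_sum fun i _ => ?_)
  rw [norm_smul, Real.norm_eq_abs, abs_of_pos (ht i).1]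
  calc t i * ‖p i‖ ≤ 1 * ‖p i‖ := mul_le_mul_of_nonneg_right (ht i).2 (norm_nonneg _)
    _ = ‖p i‖ := one_mul _
    _ ≤ R i := hR i _ (hp i)

private lemma auxExtract (hΩ : ∀ i, IsOpen (Ω i) ∧ Bornology.IsBounded (Ω i))
    (ht : ∀ i, t i ∈ Set.Ioc (0:ℝ) 1)
    (hvb : ∀ i, ∃ m : ℝ, ∀ x ∈ Ω i, m ≤ v i x)
    (hdiv : ∀ i, ∀ M : ℝ, ∃ δ > (0:ℝ), ∀ x ∈ Ω i,
      Metric.infDist x (frontier (Ω i)) < δ → M < v i x)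
    (B : ℝ) (p : ℕ → Fin (k+1) → EuclideanSpace ℝ (Fin n)) (hp : ∀ m i, p m i ∈ Ω i)
    (hfp : ∀ m, (∑ i, t i * v i (p m i)) ≤ B) :
    ∃ q : Fin (k+1) → EuclideanSpace ℝ (Fin n), (∀ i, q i ∈ Ω i) ∧ ∃ φ : ℕ → ℕ,
      StrictMono φ ∧ Tendsto (fun m => p (φ m)) atTop (𝓝 q) := by
  choose c hc using hvb
  set M : Fin (k+1) → ℝ := fun i => (B - ∑ j, t j * c j + t i * c i) / t i with hM
  have hvM : ∀ m i, v i (p m i) ≤ M i := by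
    intro m i
    rw [hM]
    rw [le_div_iff₀ (ht i).1]
    have e1 : t i * v i (p m i) + ∑ j ∈ Finset.univ.erase i, t j * v j (p m j)
        = ∑ j, t j * v j (p m j) :=
      Finset.add_sum_erase _ (fun j => t j * v j (p m j)) (Finset.mem_univ i)
    have e2 : t i * c i + ∑ j ∈ Finset.univ.erase i, t j * c j = ∑ j, t j * c j :=
      Finset.add_sum_erase _ (fun j => t j * c j) (Finset.mem_univ i)
    have e3 : ∑ j ∈ Finset.univ.erase i, t j * c j
        ≤ ∑ j ∈ Finset.univ.erase i, t j * v j (p m j) :=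
      Finset.sum_le_sum fun j _ => mul_le_mul_of_nonneg_left (hc j _ (hp m j)) (ht j).1.le
    have e4 : v i (p m i) * t i = t i * v i (p m i) := mul_comm _ _
    have e5 := hfp m
    linarith
  choose δ hδpos hδ using fun i => hdiv i (M i)
  have hinf : ∀ m i, δ i ≤ infDist (p m i) (frontier (Ω i)) := by
    intro m i
    by_contra hcon
    push_neg at hcon
    exact absurd (hvM m i) (not_le.2 (hδ i _ (hp m i) hcon))
  have hK : IsCompact (Set.pi univ fun i => closure (Ω i)) :=
    isCompact_univ_pi fun i => (hΩ i).2.isCompact_closure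
  have hmem : ∀ m, p m ∈ Set.pi univ fun i => closure (Ω i) :=
    fun m i _ => subset_closure (hp m i)
  obtain ⟨q, hqK, φ, hφ, htend⟩ := hK.tendsto_subseq hmem
  refine ⟨q, fun i => ?_, φ, hφ, htend⟩
  have hqc : q i ∈ closure (Ω i) := hqK i (mem_univ i)
  have hcoord : Tendsto (fun m => p (φ m) i) atTop (𝓝 (q i)) := tendsto_pi_nhds.1 htend i
  have hqd : δ i ≤ infDist (q i) (frontier (Ω i)) :=
    ge_of_tendsto' (((continuous_infDist_pt (frontier (Ω i))).tendsto _).comp hcoord)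
      (fun m => hinf (φ m) i)
  have hqf : q i ∉ frontier (Ω i) := by
    intro hmem
    rw [infDist_zero_of_mem hmem] at hqd
    exact absurd (hδpos i) (not_lt.2 hqd)
  rcases (closure_eq_self_union_frontier (Ω i) ▸ hqc) with h | h
  · exact h
  · exact absurd h hqf

private lemma auxExact (hΩ : ∀ i, IsOpen (Ω i) ∧ Bornology.IsBounded (Ω i))
    (ht : ∀ i, t i ∈ Set.Ioc (0:ℝ) 1)
    (hv : ∀ i, ContinuousOn (v i) (Ω i))
    (hvb : ∀ i, ∃ m : ℝ, ∀ x ∈ Ω i, m ≤ v i x)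
    (hdiv : ∀ i, ∀ M : ℝ, ∃ δ > (0:ℝ), ∀ x ∈ Ω i,
      Metric.infDist x (frontier (Ω i)) < δ → M < v i x) :
    ∀ x ∈ minkComboFam n k t Ω, InfConvExactAt n k t v Ω x := by
  rintro x ⟨p0, hp0, hx0⟩
  set w := infConvFam n k t v Ω x with hw
  have hne : ((fun p : Fin (k+1) → EuclideanSpace ℝ (Fin n) => ∑ i, t i * v i (p i)) ''
      {p | (∀ i, p i ∈ Ω i) ∧ x = ∑ i, t i • p i}).Nonempty :=
    ⟨_, mem_image_of_mem _ (⟨hp0, hx0⟩ : _ ∧ _)⟩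
  have hseq : ∀ m : ℕ, ∃ p : Fin (k+1) → EuclideanSpace ℝ (Fin n),
      ((∀ i, p i ∈ Ω i) ∧ x = ∑ i, t i • p i) ∧
        ∑ i, t i * v i (p i) < w + 1/((m:ℝ)+1) := by
    intro m
    obtain ⟨a, ha, hlt⟩ := Real.lt_sInf_add_pos hne
      (by positivity : (0:ℝ) < 1/((m:ℝ)+1))
    obtain ⟨p, hp, rfl⟩ := ha
    exact ⟨p, hp, hlt⟩
  choose ps hps hfs using hseq
  have hB : ∀ m, ∑ i, t i * v i (ps m i) ≤ w + 1 := by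
    intro m
    refine (hfs m).le.trans (add_le_add (le_refl w) ?_)
    rw [div_le_one (by positivity)]
    linarith [Nat.cast_nonneg (α := ℝ) m]
  obtain ⟨q, hq, φ, hφ, htend⟩ := auxExtract hΩ ht hvb hdiv (w+1) ps
    (fun m i => (hps m).1 i) hB
  have hxsum : x = ∑ i, t i • q i := by
    have h1 : Tendsto (fun m => ∑ i, t i • ps (φ m) i) atTop (𝓝 (∑ i, t i • q i)) :=
      auxSum htend
    have h2 : (fun m => ∑ i, t i • ps (φ m) i) = fun _ => x :=
      funext fun m => ((hps (φ m)).2).symm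
    rw [h2] at h1
    exact (tendsto_nhds_unique tendsto_const_nhds h1)
  refine ⟨q, hq, hxsum, ?_⟩
  have hle : w ≤ ∑ i, t i * v i (q i) :=
    csInf_le (auxBdd ht hvb x) (mem_image_of_mem _ (⟨hq, hxsum⟩ : _ ∧ _))
  have hge : ∑ i, t i * v i (q i) ≤ w := by
    have hval : Tendsto (fun m => ∑ i, t i * v i (ps (φ m) i)) atTop
        (𝓝 (∑ i, t i * v i (q i))) := auxVal hΩ hv hq htend
    have hub : Tendsto (fun m : ℕ => w + 1/((φ m : ℝ)+1)) atTop (𝓝 w) := by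
      have := (tendsto_one_div_add_atTop_nhds_zero_nat (𝕜 := ℝ)).comp hφ.tendsto_atTop
      simpa using tendsto_const_nhds.add this
    exact le_of_tendsto_of_tendsto' hval hub fun m => (hfs (φ m)).le
  exact le_antisymm hle hge

private lemma auxCont (hΩ : ∀ i, IsOpen (Ω i) ∧ Bornology.IsBounded (Ω i))
    (ht : ∀ i, t i ∈ Set.Ioc (0:ℝ) 1)
    (hv : ∀ i, ContinuousOn (v i) (Ω i))
    (hvb : ∀ i, ∃ m : ℝ, ∀ x ∈ Ω i, m ≤ v i x)
    (hdiv : ∀ i, ∀ M : ℝ, ∃ δ > (0:ℝ), ∀ x ∈ Ω i,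
      Metric.infDist x (frontier (Ω i)) < δ → M < v i x) :
    ContinuousOn (infConvFam n k t v Ω) (minkComboFam n k t Ω) := by
  intro x hx
  rw [ContinuousWithinAt, tendsto_iff_seq_tendsto]
  intro y hy
  rw [tendsto_nhdsWithin_iff] at hy
  obtain ⟨hyx, hymem⟩ := hy
  obtain ⟨q, hq, hxq, hwq⟩ := auxExact hΩ ht hv hvb hdiv x hx
  rw [tendsto_order]
  constructor
  · intro a ha
    by_contra hcon
    rw [Filter.not_eventually] at hcon
    have hfreq : ∃ᶠ m in atTop,
        (infConvFam n k t v Ω (y m) ≤ a ∧ y m ∈ minkComboFam n k t Ω) :=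
      (hcon.mono fun m hm => not_lt.1 hm).and_eventually hymem
    obtain ⟨ψ, hψ, hprop⟩ := Filter.extraction_of_frequently_atTop hfreq
    choose ps hps hsum hval using fun m => auxExact hΩ ht hv hvb hdiv _ (hprop m).2
    have hB : ∀ m, ∑ i, t i * v i (ps m i) ≤ a := by
      intro m; rw [← hval m]; exact (hprop m).1
    obtain ⟨q', hq', φ, hφ, htend⟩ := auxExtract hΩ ht hvb hdiv a ps (fun m => hps m) hB
    have h1 : Tendsto (fun m => ∑ i, t i • ps (φ m) i) atTop (𝓝 (∑ i, t i • q' i)) :=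
      auxSum htend
    have h2 : (fun m => ∑ i, t i • ps (φ m) i) = fun m => y (ψ (φ m)) :=
      funext fun m => (hsum (φ m)).symm
    have h3 : Tendsto (fun m => y (ψ (φ m))) atTop (𝓝 x) :=
      hyx.comp ((hψ.comp hφ).tendsto_atTop)
    rw [h2] at h1
    have hxq' : x = ∑ i, t i • q' i := tendsto_nhds_unique h3 h1
    have hwle : infConvFam n k t v Ω x ≤ ∑ i, t i * v i (q' i) :=
      csInf_le (auxBdd ht hvb x) (mem_image_of_mem _ (⟨hq', hxq'⟩ : _ ∧ _))
    have hlim : Tendsto (fun m => ∑ i, t i * v i (ps (φ m) i)) atTop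
        (𝓝 (∑ i, t i * v i (q' i))) := auxVal hΩ hv hq' htend
    have hle : ∑ i, t i * v i (q' i) ≤ a :=
      le_of_tendsto hlim (Filter.Eventually.of_forall fun m => hB (φ m))
    linarith
  · intro b hb
    set a0 : ℕ → EuclideanSpace ℝ (Fin n) := fun m => q 0 + (t 0)⁻¹ • (y m - x) with ha0def
    have hyx0 : Tendsto (fun m => y m - x) atTop (𝓝 0) := by
      simpa using hyx.sub_const x
    have ha0 : Tendsto a0 atTop (𝓝 (q 0)) := by
      have h1 : Tendsto (fun m => (t 0)⁻¹ • (y m - x)) atTop (𝓝 ((t 0)⁻¹ • (0:EuclideanSpace ℝ (Fin n)))) :=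
        hyx0.const_smul _
      rw [smul_zero] at h1
      simpa using tendsto_const_nhds.add h1
    have hmem0 : ∀ᶠ m in atTop, a0 m ∈ Ω 0 := ha0.eventually ((hΩ 0).1.mem_nhds (hq 0))
    set qm : ℕ → Fin (k+1) → EuclideanSpace ℝ (Fin n) :=
      fun m => Function.update q 0 (a0 m) with hqmdef
    have hsumq : ∀ m, ∑ i, t i • qm m i = y m := by
      intro m
      rw [hqmdef]
      simp only
      rw [auxUpdate' ht, ← hxq]
      abel
    have hqmt : Tendsto qm atTop (𝓝 q) := by
      rw [tendsto_pi_nhds]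
      intro i
      by_cases h0 : i = 0
      · subst h0
        simpa [hqmdef] using ha0
      · simp only [hqmdef, Function.update_of_ne h0]
        exact tendsto_const_nhds
    have hvalt : Tendsto (fun m => ∑ i, t i * v i (qm m i)) atTop
        (𝓝 (∑ i, t i * v i (q i))) := auxVal hΩ hv hq hqmt
    have hblt : ∀ᶠ m in atTop, ∑ i, t i * v i (qm m i) < b := by
      refine hvalt.eventually_lt_const ?_
      rw [hwq] at hb
      exact hb
    filter_upwards [hmem0, hblt] with m hm0 hmb
    have hqmmem : ∀ i, qm m i ∈ Ω i := by
      intro i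
      by_cases h0 : i = 0
      · subst h0; simpa [hqmdef] using hm0
      · simp only [hqmdef, Function.update_of_ne h0]; exact hq i
    have hwm : infConvFam n k t v Ω (y m) ≤ ∑ i, t i * v i (qm m i) :=
      csInf_le (auxBdd ht hvb (y m))
        (mem_image_of_mem _ (⟨hqmmem, (hsumq m).symm⟩ : _ ∧ _))
    exact lt_of_le_of_lt hwm hmb

end InfConvAux

/-- Proposition 2.6: if the `v_i` are continuous, bounded from below and blow up at `∂Ω_i`, then
their weighted infimal convolution is continuous on `Ω_λ`, exact at every point of `Ω_λ`, and
blows up at `∂Ω_λ`. -/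
theorem infimal_convolution_exact_and_divergent
    (n k : ℕ) (Ω : Fin (k+1) → Set (EuclideanSpace ℝ (Fin n)))
    (hΩ : ∀ i, IsOpen (Ω i) ∧ Bornology.IsBounded (Ω i))
    (t : Fin (k+1) → ℝ) (ht : ∀ i, t i ∈ Set.Ioc (0:ℝ) 1) (hsum : ∑ i, t i = 1)
    (v : Fin (k+1) → EuclideanSpace ℝ (Fin n) → ℝ)
    (hv : ∀ i, ContinuousOn (v i) (Ω i))
    (hvb : ∀ i, ∃ m : ℝ, ∀ x ∈ Ω i, m ≤ v i x)
    (hdiv : ∀ i, ∀ M : ℝ, ∃ δ > (0:ℝ), ∀ x ∈ Ω i,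
      Metric.infDist x (frontier (Ω i)) < δ → M < v i x) :
    ContinuousOn (infConvFam n k t v Ω) (minkComboFam n k t Ω) ∧
    (∀ x ∈ minkComboFam n k t Ω, InfConvExactAt n k t v Ω x) ∧
    ∀ xs : ℕ → EuclideanSpace ℝ (Fin n), (∀ m, xs m ∈ minkComboFam n k t Ω) →
      Tendsto (fun m => Metric.infDist (xs m) (frontier (minkComboFam n k t Ω))) atTop (nhds 0) →
      Tendsto (fun m => infConvFam n k t v Ω (xs m)) atTop atTop := by
  refine ⟨auxCont hΩ ht hv hvb hdiv, auxExact hΩ ht hv hvb hdiv, ?_⟩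
  intro xs hxs hdist
  rw [Filter.tendsto_atTop]
  by_contra hcon
  push_neg at hcon
  obtain ⟨B, hB⟩ := hcon
  obtain ⟨ψ, hψ, hψB⟩ := Filter.extraction_of_frequently_atTop
    (hB.mono fun m hm => hm)
  choose ps hps hsum hval using fun m => auxExact hΩ ht hv hvb hdiv _ (hxs (ψ m))
  have hB' : ∀ m, ∑ i, t i * v i (ps m i) ≤ B := by
    intro m; rw [← hval m]; exact (hψB m).le
  obtain ⟨q, hq, φ, hφ, htend⟩ := auxExtract hΩ ht hvb hdiv B ps (fun m => hps m) hB'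
  set x₀ := ∑ i, t i • q i with hx₀def
  have hx₀ : x₀ ∈ minkComboFam n k t Ω := ⟨q, hq, rfl⟩
  have hxst : Tendsto (fun m => xs (ψ (φ m))) atTop (𝓝 x₀) := by
    have h1 := auxSum (t := t) htend
    have h2 : (fun m => ∑ i, t i • ps (φ m) i) = fun m => xs (ψ (φ m)) :=
      funext fun m => (hsum (φ m)).symm
    rw [h2] at h1; exact h1
  set F := frontier (minkComboFam n k t Ω) with hF
  have h1 : Tendsto (fun m => infDist (xs (ψ (φ m))) F) atTop (𝓝 (infDist x₀ F)) :=
    ((continuous_infDist_pt F).tendsto _).comp hxst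
  have h2 : Tendsto (fun m => infDist (xs (ψ (φ m))) F) atTop (𝓝 0) :=
    hdist.comp ((hψ.comp hφ).tendsto_atTop)
  have h0 : infDist x₀ F = 0 := tendsto_nhds_unique h1 h2
  have hopen : IsOpen (minkComboFam n k t Ω) := auxOpen hΩ ht
  rcases eq_empty_or_nonempty F with hFe | hFne
  · have hclopen : IsClopen (minkComboFam n k t Ω) := isClopen_iff_frontier_eq_empty.2 hFe
    have huniv : minkComboFam n k t Ω = univ := hclopen.eq_univ ⟨x₀, hx₀⟩
    have hbdd := auxBounded hΩ ht
    rw [huniv] at hbdd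
    rcases subsingleton_or_nontrivial (EuclideanSpace ℝ (Fin n)) with hs | hn
    · have hΩ0 : Ω 0 = univ := Set.Nonempty.eq_univ ⟨q 0, hq 0⟩
      obtain ⟨δ, hδ, hMδ⟩ := hdiv 0 (v 0 (q 0))
      have hlt : infDist (q 0) (frontier (Ω 0)) < δ := by
        rw [hΩ0, frontier_univ, infDist_empty]; exact hδ
      exact absurd (hMδ _ (hq 0) hlt) (lt_irrefl _)
    · exact NormedSpace.unbounded_univ ℝ (EuclideanSpace ℝ (Fin n)) hbdd
  · have hx₀F : x₀ ∈ F := (IsClosed.mem_iff_infDist_zero isClosed_frontier hFne).2 h0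
    rw [hF, hopen.frontier_eq] at hx₀F
    exact hx₀F.2 hx₀

end
end

section
/- Let Ω₀,…,Ω_k ⊂ ℝⁿ be open bounded sets, t₀,…,t_k ∈ (0,1] with Σ t_i = 1, and Ω_λ := t₀Ω₀+⋯+t_kΩ_k. If x = Σ_{i=0}^k t_i x_i with x_i ∈ Ω_i for every i, and dist(x, ∂Ω_λ) < δ, then dist(x_i, ∂Ω_i) < δ/t_i for every i = 0,…,k. -/
open Metric Filter Topology Set

noncomputable section

/-- The claim in the proof of Proposition 2.6: if `x = Σ t_i x_i` with `x_i ∈ Ω_i` and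
`dist(x, ∂Ω_λ) < δ`, then `dist(x_i, ∂Ω_i) < δ / t_i` for every `i`. -/
theorem dist_frontier_components
    (n k : ℕ) (Ω : Fin (k+1) → Set (EuclideanSpace ℝ (Fin n)))
    (hΩ : ∀ i, IsOpen (Ω i) ∧ Bornology.IsBounded (Ω i))
    (t : Fin (k+1) → ℝ) (ht : ∀ i, t i ∈ Set.Ioc (0:ℝ) 1) (hsum : ∑ i, t i = 1)
    (x : EuclideanSpace ℝ (Fin n)) (p : Fin (k+1) → EuclideanSpace ℝ (Fin n))
    (hp : ∀ i, p i ∈ Ω i) (hpx : x = ∑ i, t i • p i)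
    (δ : ℝ) (hx : Metric.infDist x (frontier (minkComboFam n k t Ω)) < δ) :
    ∀ i, Metric.infDist (p i) (frontier (Ω i)) < δ / t i := by
  intro i
  have hti := ht i
  have hδpos : 0 < δ := lt_of_le_of_lt Metric.infDist_nonneg hx
  by_cases hfr : frontier (Ω i) = ∅
  · rw [hfr]
    simpa [Metric.infDist_empty] using div_pos hδpos hti.1
  · obtain ⟨q, hq⟩ := Set.nonempty_iff_ne_empty.mpr hfr
    set r := Metric.infDist (p i) (frontier (Ω i)) with hrdef
    have hqnot : q ∉ Ω i := fun h => hq.2 (by rwa [(hΩ i).1.interior_eq])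
    have hΩne : Ω i ≠ univ := fun h => hqnot (h ▸ mem_univ q)
    -- `ball (p i) r ⊆ Ω i`
    obtain ⟨y, hyfr, hy⟩ := exists_mem_frontier_infDist_compl_eq_dist (hp i) hΩne
    have hrle : r ≤ Metric.infDist (p i) (Ω i)ᶜ := by
      rw [hy]; exact Metric.infDist_le_dist_of_mem hyfr
    have hball : Metric.ball (p i) r ⊆ Ω i := by
      intro z hz
      by_contra hzΩ
      have h1 : Metric.infDist (p i) (Ω i)ᶜ ≤ dist (p i) z :=
        Metric.infDist_le_dist_of_mem hzΩ
      rw [Metric.mem_ball, dist_comm] at hz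
      linarith [hrle.trans h1]
    -- key sum identity
    have key : ∀ v : EuclideanSpace ℝ (Fin n),
        ∑ j, t j • Function.update p i v j = x + t i • (v - p i) := by
      intro v
      have h1 : ∀ j : Fin (k+1), t j • Function.update p i v j
          = t j • p j + (if j = i then t i • (v - p i) else 0) := by
        intro j
        rcases eq_or_ne j i with rfl | hj
        · simp [Function.update_self, smul_sub]
        · simp [Function.update_of_ne hj, hj]
      simp_rw [h1, Finset.sum_add_distrib, Finset.sum_ite_eq' Finset.univ i, hpx]
      simp
    -- `ball x (t i * r) ⊆ minkComboFam n k t Ω`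
    have hballx : Metric.ball x (t i * r) ⊆ minkComboFam n k t Ω := by
      intro z hz
      refine ⟨Function.update p i (p i + (t i)⁻¹ • (z - x)), fun j => ?_, ?_⟩
      · rcases eq_or_ne j i with rfl | hj
        · rw [Function.update_self]
          apply hball
          rw [Metric.mem_ball, dist_eq_norm]
          have : p j + (t j)⁻¹ • (z - x) - p j = (t j)⁻¹ • (z - x) := by abel
          rw [this, norm_smul, norm_inv, Real.norm_eq_abs, abs_of_pos hti.1]
          rw [Metric.mem_ball, dist_eq_norm] at hz
          rw [inv_mul_lt_iff₀ hti.1]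
          linarith [hz]
        · rw [Function.update_of_ne hj]; exact hp j
      · rw [key]
        have : p i + (t i)⁻¹ • (z - x) - p i = (t i)⁻¹ • (z - x) := by abel
        rw [this, smul_inv_smul₀ (ne_of_gt hti.1)]
        abel
    -- nontriviality and boundedness of the Minkowski combination
    have hnt : Nontrivial (EuclideanSpace ℝ (Fin n)) :=
      ⟨⟨p i, q, fun h => hqnot (h ▸ hp i)⟩⟩
    have hbdd : Bornology.IsBounded (minkComboFam n k t Ω) := by
      choose R hR using fun j => isBounded_iff_forall_norm_le.1 (hΩ j).2
      refine isBounded_iff_forall_norm_le.2 ⟨∑ j, R j, ?_⟩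
      rintro z ⟨p', hp', rfl⟩
      calc ‖∑ j, t j • p' j‖ ≤ ∑ j, ‖t j • p' j‖ := norm_sum_le _ _
        _ ≤ ∑ j, R j := by
            refine Finset.sum_le_sum fun j _ => ?_
            have hRj := hR j _ (hp' j)
            have h0 : 0 ≤ ‖p' j‖ := norm_nonneg _
            rw [norm_smul, Real.norm_eq_abs, abs_of_pos (ht j).1]
            nlinarith [(ht j).1, (ht j).2]
    have hne : minkComboFam n k t Ω ≠ univ := fun h =>
      NormedSpace.unbounded_univ ℝ (EuclideanSpace ℝ (Fin n)) (h ▸ hbdd)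
    have hxmem : x ∈ minkComboFam n k t Ω := ⟨p, hp, hpx⟩
    have hfrne : (frontier (minkComboFam n k t Ω)).Nonempty :=
      nonempty_frontier_iff.mpr ⟨⟨x, hxmem⟩, hne⟩
    -- `t i * r ≤ infDist x (frontier Ω_λ)`
    have hle : t i * r ≤ Metric.infDist x (frontier (minkComboFam n k t Ω)) := by
      by_contra hlt
      push_neg at hlt
      obtain ⟨z, hzfr, hzd⟩ := (Metric.infDist_lt_iff hfrne).1 hlt
      have hzball : z ∈ Metric.ball x (t i * r) := by
        rwa [Metric.mem_ball, dist_comm]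
      have : z ∈ interior (minkComboFam n k t Ω) :=
        interior_maximal hballx Metric.isOpen_ball hzball
      exact hzfr.2 this
    have : t i * r < δ := lt_of_le_of_lt hle hx
    rw [lt_div_iff₀ hti.1]
    linarith

end
end

section
/- Let t₀,…,t_k ∈ (0,1] with Σ_{i=0}^k t_i = 1 and let A₀,…,A_k be positive definite real symmetric n×n matrices. Then for every h ∈ ℝⁿ, the infimum of Σ_{i=0}^k t_i ⟨A_i h_i, h_i⟩ over all h₀,…,h_k ∈ ℝⁿ with Σ_{i=0}^k t_i h_i = h equals ⟨(t₀A₀^{−1} + ⋯ + t_kA_k^{−1})^{−1} h, h⟩. Consequently, if a symmetric matrix B satisfies ⟨B h, h⟩ ≤ Σ_{i=0}^k t_i ⟨A_i h_i, h_i⟩ for all h₀,…,h_k ∈ ℝⁿ and h = Σ t_i h_i, then B ≤ (t₀A₀^{−1} + ⋯ + t_kA_k^{−1})^{−1} in the ordering of symmetric matrices. -/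
open Metric Filter Topology Set

noncomputable section

section myHelpers

open Matrix

variable {n : ℕ}

lemma my_sum_mulVec {k : ℕ} (M : Fin k → Matrix (Fin n) (Fin n) ℝ) (x : Fin n → ℝ) :
    (∑ i, M i) *ᵥ x = ∑ i, (M i) *ᵥ x := by
  ext j
  simp [Matrix.mulVec, dotProduct, Matrix.sum_apply, Finset.sum_mul,
    Finset.sum_comm (γ := Fin n)]

lemma my_dotProduct_sum {k : ℕ} (v : Fin n → ℝ) (w : Fin k → Fin n → ℝ) :
    v ⬝ᵥ (∑ i, w i) = ∑ i, v ⬝ᵥ w i := by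
  simp [dotProduct, Finset.mul_sum]
  rw [Finset.sum_comm]

lemma my_dp_weighted {k : ℕ} (z : Fin n → ℝ) (t : Fin k → ℝ) (u : Fin k → Fin n → ℝ) :
    z ⬝ᵥ (∑ i, t i • u i) = ∑ i, t i * (z ⬝ᵥ u i) := by
  rw [my_dotProduct_sum]
  exact Finset.sum_congr rfl fun i _ => by
    rw [dotProduct_smul]; rfl

lemma my_dp_symm (M : Matrix (Fin n) (Fin n) ℝ) (hM : M.IsHermitian) (u w : Fin n → ℝ) :
    M *ᵥ u ⬝ᵥ w = M *ᵥ w ⬝ᵥ u := by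
  have hT : Mᵀ = M := by
    rw [← Matrix.conjTranspose_eq_transpose_of_trivial]; exact hM
  rw [← hT, Matrix.mulVec_transpose, ← Matrix.dotProduct_mulVec, hT, dotProduct_comm]

end myHelpers

open Matrix in
/-- The minimization step at the end of the proof of Proposition 2.5: the infimum of
`Σ t_i ⟨A_i h_i, h_i⟩` over decompositions `h = Σ t_i h_i` equals the quadratic form of the
harmonic mean `(Σ t_i A_i⁻¹)⁻¹` at `h`; consequently any symmetric `B` whose quadratic form is
dominated by `Σ t_i ⟨A_i h_i, h_i⟩` for all such decompositions satisfies
`B ≤ (Σ t_i A_i⁻¹)⁻¹`. -/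
theorem harmonic_mean_of_quadratic_forms
    (n k : ℕ) (t : Fin (k+1) → ℝ) (ht : ∀ i, t i ∈ Set.Ioc (0:ℝ) 1) (hsum : ∑ i, t i = 1)
    (A : Fin (k+1) → Matrix (Fin n) (Fin n) ℝ) (hA : ∀ i, (A i).PosDef) :
    (∀ h : Fin n → ℝ,
      sInf {s : ℝ | ∃ hv : Fin (k+1) → Fin n → ℝ, (∑ i, t i • hv i) = h ∧
          s = ∑ i, t i * ((A i).mulVec (hv i) ⬝ᵥ hv i)} =
        (∑ i, t i • (A i)⁻¹)⁻¹.mulVec h ⬝ᵥ h) ∧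
    (∀ B : Matrix (Fin n) (Fin n) ℝ, B.IsSymm →
      (∀ hv : Fin (k+1) → Fin n → ℝ,
        B.mulVec (∑ i, t i • hv i) ⬝ᵥ (∑ i, t i • hv i) ≤
          ∑ i, t i * ((A i).mulVec (hv i) ⬝ᵥ hv i)) →
      MatLE n B (∑ i, t i • (A i)⁻¹)⁻¹) := by
  classical
  have htpos : ∀ i, 0 < t i := fun i => (ht i).1
  set S : Matrix (Fin n) (Fin n) ℝ := ∑ i, t i • (A i)⁻¹ with hSdef
  have hAinvH : ∀ i, ((A i)⁻¹).IsHermitian := fun i => ((hA i).inv).1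
  have hSmulVec : ∀ x : Fin n → ℝ, S *ᵥ x = ∑ i, t i • ((A i)⁻¹ *ᵥ x) := by
    intro x
    rw [hSdef, my_sum_mulVec]
    exact Finset.sum_congr rfl fun i _ => Matrix.smul_mulVec _ _ _
  have hSH : S.IsHermitian := by
    show Sᴴ = S
    rw [hSdef, Matrix.conjTranspose_sum]
    exact Finset.sum_congr rfl fun i _ => by
      rw [Matrix.conjTranspose_smul, star_trivial, hAinvH i]
  have hSpos : S.PosDef := by
    refine Matrix.PosDef.of_dotProduct_mulVec_pos hSH (fun x hx => ?_)
    have : (star x) ⬝ᵥ (S *ᵥ x) = ∑ i, t i * (x ⬝ᵥ ((A i)⁻¹ *ᵥ x)) := by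
      rw [star_trivial, hSmulVec, my_dp_weighted]
    rw [this]
    refine Finset.sum_pos (fun i _ => mul_pos (htpos i) ?_) ⟨0, Finset.mem_univ 0⟩
    have := ((hA i).inv).dotProduct_mulVec_pos hx
    rwa [star_trivial] at this
  have hSdet : IsUnit S.det := (Matrix.isUnit_iff_isUnit_det S).1 hSpos.isUnit
  set H : Matrix (Fin n) (Fin n) ℝ := S⁻¹ with hHdef
  have hSH1 : S * H = 1 := Matrix.mul_nonsing_inv _ hSdet
  have hHpos : H.PosDef := hSpos.inv
  -- the minimizer
  set w : (Fin n → ℝ) → Fin (k+1) → Fin n → ℝ :=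
    fun h i => (A i)⁻¹ *ᵥ (H *ᵥ h) with hwdef
  have hAw : ∀ (h : Fin n → ℝ) i, A i *ᵥ w h i = H *ᵥ h := by
    intro h i
    rw [hwdef]
    rw [Matrix.mulVec_mulVec, Matrix.mul_nonsing_inv _
      ((Matrix.isUnit_iff_isUnit_det _).1 (hA i).isUnit), Matrix.one_mulVec]
  have hwsum : ∀ h : Fin n → ℝ, ∑ i, t i • w h i = h := by
    intro h
    have : ∑ i, t i • w h i = S *ᵥ (H *ᵥ h) := by
      rw [hSmulVec]
    rw [this, Matrix.mulVec_mulVec, hSH1, Matrix.one_mulVec]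
  have hwval : ∀ h : Fin n → ℝ,
      ∑ i, t i * ((A i) *ᵥ (w h i) ⬝ᵥ w h i) = H *ᵥ h ⬝ᵥ h := by
    intro h
    have : ∀ i, (A i) *ᵥ (w h i) ⬝ᵥ w h i = (H *ᵥ h) ⬝ᵥ w h i := fun i => by
      rw [hAw]
    calc ∑ i, t i * ((A i) *ᵥ (w h i) ⬝ᵥ w h i)
        = ∑ i, t i * ((H *ᵥ h) ⬝ᵥ w h i) := Finset.sum_congr rfl fun i _ => by rw [this i]
      _ = (H *ᵥ h) ⬝ᵥ (∑ i, t i • w h i) := (my_dp_weighted _ _ _).symm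
      _ = H *ᵥ h ⬝ᵥ h := by rw [hwsum]
  have hlb : ∀ (h : Fin n → ℝ) (hv : Fin (k+1) → Fin n → ℝ), (∑ i, t i • hv i) = h →
      H *ᵥ h ⬝ᵥ h ≤ ∑ i, t i * ((A i) *ᵥ (hv i) ⬝ᵥ hv i) := by
    intro h hv hveq
    set z : Fin n → ℝ := H *ᵥ h with hzdef
    have hterm : ∀ i, t i * (2 * (z ⬝ᵥ hv i) - z ⬝ᵥ w h i) ≤ t i * ((A i) *ᵥ (hv i) ⬝ᵥ hv i) := by
      intro i
      have hps := (hA i).posSemidef.dotProduct_mulVec_nonneg (hv i - w h i)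
      rw [star_trivial, dotProduct_comm] at hps
      rw [Matrix.mulVec_sub, sub_dotProduct, dotProduct_sub,
        dotProduct_sub] at hps
      have h1 : (A i) *ᵥ hv i ⬝ᵥ w h i = z ⬝ᵥ hv i := by
        rw [my_dp_symm _ (hA i).1, hAw, hzdef]
      have h2 : (A i) *ᵥ w h i ⬝ᵥ hv i = z ⬝ᵥ hv i := by
        rw [hAw, hzdef]
      have h3 : (A i) *ᵥ w h i ⬝ᵥ w h i = z ⬝ᵥ w h i := by
        rw [hAw, hzdef]
      rw [h1, h2, h3] at hps
      have := htpos i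
      nlinarith [hps]
    calc H *ᵥ h ⬝ᵥ h = 2 * (z ⬝ᵥ h) - z ⬝ᵥ h := by rw [hzdef]; ring
      _ = 2 * (z ⬝ᵥ ∑ i, t i • hv i) - z ⬝ᵥ ∑ i, t i • w h i := by rw [hveq, hwsum]
      _ = ∑ i, t i * (2 * (z ⬝ᵥ hv i) - z ⬝ᵥ w h i) := by
          rw [my_dp_weighted, my_dp_weighted, Finset.mul_sum, ← Finset.sum_sub_distrib]
          exact Finset.sum_congr rfl fun i _ => by ring
      _ ≤ ∑ i, t i * ((A i) *ᵥ (hv i) ⬝ᵥ hv i) := Finset.sum_le_sum fun i _ => hterm i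
  constructor
  · intro h
    have hmem : (H *ᵥ h ⬝ᵥ h) ∈ {s : ℝ | ∃ hv : Fin (k+1) → Fin n → ℝ,
        (∑ i, t i • hv i) = h ∧ s = ∑ i, t i * ((A i).mulVec (hv i) ⬝ᵥ hv i)} :=
      ⟨w h, hwsum h, (hwval h).symm⟩
    refine le_antisymm (csInf_le ⟨H *ᵥ h ⬝ᵥ h, ?_⟩ hmem) (le_csInf ⟨_, hmem⟩ ?_) <;>
    · rintro s ⟨hv, hveq, rfl⟩
      exact hlb h hv hveq
  · intro B hBsymm hyp
    have hBH : B.IsHermitian := by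
      show Bᴴ = B
      rw [Matrix.conjTranspose_eq_transpose_of_trivial]; exact hBsymm
    refine Matrix.PosSemidef.of_dotProduct_mulVec_nonneg (Matrix.IsHermitian.sub hHpos.1 hBH) fun x => ?_
    have h1 := hyp (w x)
    rw [hwsum x, hwval x] at h1
    rw [star_trivial, Matrix.sub_mulVec, dotProduct_sub]
    have h2 : x ⬝ᵥ (B *ᵥ x) = B *ᵥ x ⬝ᵥ x := dotProduct_comm _ _
    have h3 : x ⬝ᵥ (H *ᵥ x) = H *ᵥ x ⬝ᵥ x := dotProduct_comm _ _
    rw [h2, h3]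
    linarith


end
end
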